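/- arXiv:2306.14363 — 2 statements merged into one kernel-verified Lean document; each statement's English description precedes it below -/
import Mathlib

section
/- Let c ≠ 0 and let g : I → ℝ solve g̈(s)/(1 + ġ(s)²) = −c on an interval I. Then there exist constants k₁, a₁ with g(s) = (1/c)·log(cos(c s − k₁)) + a₁ on any subinterval where cos(c s − k₁) > 0 and arctan(ġ(s)) = −(c s − k₁). -/
open Real Set

/-- Solving `g̈/(1+ġ²) = −c` yields the Scherk profile
`g(s) = (1/c) log(cos(c s − k₁)) + a₁`. -/
theorem stmt_4 (c : ℝ) (hc : c ≠ 0) (I : Set ℝ) (hI : IsOpen I) (hIconn : I.OrdConnected)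
    (g : ℝ → ℝ) (hg : ContDiffOn ℝ 2 g I)
    (hode : ∀ s ∈ I, deriv (deriv g) s / (1 + (deriv g s) ^ 2) = -c) :
    ∃ k₁ a₁ : ℝ, ∀ s ∈ I,
      Real.cos (c * s - k₁) > 0 → Real.arctan (deriv g s) = -(c * s - k₁) →
        g s = (1 / c) * Real.log (Real.cos (c * s - k₁)) + a₁ := by
  rcases I.eq_empty_or_nonempty with hIe | ⟨s₀, hs₀⟩
  · exact ⟨0, 0, fun s hs => by simp [hIe] at hs⟩
  have hconv : Convex ℝ I := convex_iff_ordConnected.mpr hIconn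
  -- differentiability of g and deriv g on I
  have hdg : ∀ s ∈ I, HasDerivAt g (deriv g s) s := fun s hs =>
    ((hg.differentiableOn (by norm_num)).differentiableAt (hI.mem_nhds hs)).hasDerivAt
  have hdg2 : ∀ s ∈ I, HasDerivAt (deriv g) (deriv (deriv g) s) s := fun s hs =>
    (((hg.deriv_of_isOpen (m := 1) hI (by norm_num)).differentiableOn
      (by norm_num)).differentiableAt (hI.mem_nhds hs)).hasDerivAt
  -- the function arctan (g') + c s has derivative 0 on I
  have hpos : ∀ s : ℝ, (0:ℝ) < 1 + (deriv g s) ^ 2 := fun s => by positivity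
  have hF1 : ∀ s ∈ I, HasDerivAt (fun s => Real.arctan (deriv g s) + c * s) 0 s := by
    intro s hs
    have h1 := ((Real.hasDerivAt_arctan (deriv g s)).comp s (hdg2 s hs)).add
      ((hasDerivAt_id s).const_mul c)
    have h2 : 1 / (1 + deriv g s ^ 2) * deriv (deriv g) s + c * 1 = 0 := by
      have := hode s hs
      field_simp at this ⊢
      linarith [this]
    rwa [h2] at h1
  have hconst1 : ∀ s ∈ I, Real.arctan (deriv g s) + c * s
      = Real.arctan (deriv g s₀) + c * s₀ := by
    intro s hs
    have := hconv.norm_image_sub_le_of_norm_hasDerivWithin_le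
      (f := fun s => Real.arctan (deriv g s) + c * s) (f' := fun _ => (0:ℝ)) (C := 0)
      (fun x hx => (hF1 x hx).hasDerivWithinAt) (fun x _ => by simp) hs₀ hs
    simp only [norm_eq_abs, zero_mul] at this
    have := abs_nonpos_iff.mp (le_antisymm this (abs_nonneg _)).le
    linarith [sub_eq_zero.mp this]
  set k₁ : ℝ := Real.arctan (deriv g s₀) + c * s₀ with hk₁
  have harc : ∀ s ∈ I, Real.arctan (deriv g s) = -(c * s - k₁) := by
    intro s hs
    have := hconst1 s hs
    linarith
  have hcos : ∀ s ∈ I, 0 < Real.cos (c * s - k₁) := by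
    intro s hs
    have : Real.cos (c * s - k₁) = Real.cos (Real.arctan (deriv g s)) := by
      rw [harc s hs, Real.cos_neg]
    rw [this]
    exact Real.cos_arctan_pos _
  have htan : ∀ s ∈ I, Real.sin (c * s - k₁) / Real.cos (c * s - k₁) = -deriv g s := by
    intro s hs
    have h1 : Real.tan (c * s - k₁) = -deriv g s := by
      have : Real.tan (-(c * s - k₁)) = deriv g s := by
        rw [← harc s hs, Real.tan_arctan]
      rw [Real.tan_neg] at this
      linarith
    rw [← Real.tan_eq_sin_div_cos, h1]
  -- the function g - (1/c) log (cos (c s - k₁)) has derivative 0 on I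
  have hF2 : ∀ s ∈ I,
      HasDerivAt (fun s => g s - (1/c) * Real.log (Real.cos (c * s - k₁))) 0 s := by
    intro s hs
    have hu : HasDerivAt (fun s : ℝ => c * s - k₁) c s := by
      simpa using ((hasDerivAt_id s).const_mul c).sub_const k₁
    have hcosd : HasDerivAt (fun s : ℝ => Real.cos (c * s - k₁))
        (-Real.sin (c * s - k₁) * c) s := (Real.hasDerivAt_cos _).comp s hu
    have hlog : HasDerivAt (fun s : ℝ => Real.log (Real.cos (c * s - k₁)))
        ((Real.cos (c * s - k₁))⁻¹ * (-Real.sin (c * s - k₁) * c)) s :=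
      by have := (Real.hasDerivAt_log (hcos s hs).ne').comp s hcosd; exact this
    have h := (hdg s hs).sub (hlog.const_mul (1/c))
    have hval : deriv g s - 1/c * ((Real.cos (c * s - k₁))⁻¹
        * (-Real.sin (c * s - k₁) * c)) = 0 := by
      have ht := htan s hs
      have hcne := (hcos s hs).ne'
      field_simp at ht ⊢
      rw [ht]; ring
    rwa [hval] at h
  refine ⟨k₁, g s₀ - (1/c) * Real.log (Real.cos (c * s₀ - k₁)), fun s hs _ _ => ?_⟩
  have := hconv.norm_image_sub_le_of_norm_hasDerivWithin_le
    (f := fun s => g s - (1/c) * Real.log (Real.cos (c * s - k₁)))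
    (f' := fun _ => (0:ℝ)) (C := 0)
    (fun x hx => (hF2 x hx).hasDerivWithinAt) (fun x _ => by simp) hs₀ hs
  simp only [norm_eq_abs, zero_mul] at this
  have h0 := abs_nonpos_iff.mp (le_antisymm this (abs_nonneg _)).le
  have := sub_eq_zero.mp h0
  linarith
end

section
/- Let ρ(s,t,·) be the density of the Gaussian N(0, Σ(s,t)) on ℝⁿ with Σ(s,t) positive definite and C¹ in s, and let v_s(s,t,x) = A_s(s,t)·x for a matrix A_s(s,t). Then the continuity equation ∂_s ρ + ∇·(ρ v_s) = 0 holds for all x if and only if the Lyapunov equation ∂_s Σ = A_s Σ + Σ A_sᵀ holds. -/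
open Real Matrix

/-- Density of the centered Gaussian with covariance `S` on `ℝⁿ`. -/
noncomputable def gaussDensity {n : ℕ} (S : Matrix (Fin n) (Fin n) ℝ) (x : Fin n → ℝ) : ℝ :=
  ((2 * Real.pi) ^ n * S.det) ^ (-(1:ℝ)/2) * Real.exp (-(1/2) * (x ⬝ᵥ S⁻¹ *ᵥ x))

lemma hasDerivAt_det_aux {n : ℕ} (M : ℝ → Matrix (Fin n) (Fin n) ℝ)
    (M' : Matrix (Fin n) (Fin n) ℝ) (t : ℝ)
    (h : ∀ i j, HasDerivAt (fun u => M u i j) (M' i j) t) :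
    HasDerivAt (fun u => (M u).det) ((Matrix.adjugate (M t) * M').trace) t := by
  have hprod : ∀ σ : Equiv.Perm (Fin n),
      HasDerivAt (fun u => ∏ i, M u (σ i) i)
        (∑ i, (∏ j ∈ Finset.univ.erase i, M t (σ j) j) • M' (σ i) i) t := by
    intro σ
    exact HasDerivAt.fun_finsetProd (fun i _ => h (σ i) i)
  have hmain : HasDerivAt (fun u => (M u).det)
      (∑ σ : Equiv.Perm (Fin n), ((Equiv.Perm.sign σ : ℤ) : ℝ) *
        (∑ i, (∏ j ∈ Finset.univ.erase i, M t (σ j) j) • M' (σ i) i)) t := by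
    have : HasDerivAt (fun u => ∑ σ : Equiv.Perm (Fin n),
        ((Equiv.Perm.sign σ : ℤ) : ℝ) * ∏ i, M u (σ i) i)
        (∑ σ : Equiv.Perm (Fin n), ((Equiv.Perm.sign σ : ℤ) : ℝ) *
          (∑ i, (∏ j ∈ Finset.univ.erase i, M t (σ j) j) • M' (σ i) i)) t :=
      HasDerivAt.fun_sum fun σ _ => (hprod σ).const_mul _
    convert this using 1
    funext u
    exact Matrix.det_apply' (M u)
  convert hmain using 1
  -- trace (adj (M t) * M') = ∑ i det (updateCol (M t) i (fun k => M' k i)) = the sum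
  have step1 : (Matrix.adjugate (M t) * M').trace
      = ∑ i, ((M t).updateCol i (fun k => M' k i)).det := by
    simp_rw [← Matrix.cramer_apply, Matrix.cramer_eq_adjugate_mulVec]
    simp [Matrix.trace, Matrix.diag, Matrix.mul_apply, Matrix.mulVec, dotProduct]
  rw [step1]
  have step2 : ∀ i, ((M t).updateCol i (fun k => M' k i)).det
      = ∑ σ : Equiv.Perm (Fin n), ((Equiv.Perm.sign σ : ℤ) : ℝ) *
          (M' (σ i) i * ∏ j ∈ Finset.univ.erase i, M t (σ j) j) := by
    intro i
    rw [Matrix.det_apply']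
    congr 1; funext σ
    congr 1
    rw [← Finset.mul_prod_erase Finset.univ _ (Finset.mem_univ i)]
    congr 1
    · simp [Matrix.updateCol_apply]
    · apply Finset.prod_congr rfl
      intro j hj
      simp [Matrix.updateCol_apply, Finset.ne_of_mem_erase hj]
  simp_rw [step2, smul_eq_mul]
  rw [Finset.sum_comm]
  congr 1; funext σ
  rw [Finset.mul_sum]
  congr 1; funext i
  ring

lemma hasDerivAt_inv_aux {n : ℕ} (Sig : ℝ → Matrix (Fin n) (Fin n) ℝ)
    (Sig' : Matrix (Fin n) (Fin n) ℝ) (s₀ : ℝ)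
    (hpd : ∀ u : ℝ, (Sig u).PosDef)
    (hSig' : ∀ i j, HasDerivAt (fun u => Sig u i j) (Sig' i j) s₀) :
    ∀ i j, HasDerivAt (fun u => (Sig u)⁻¹ i j)
      ((-((Sig s₀)⁻¹ * Sig' * (Sig s₀)⁻¹)) i j) s₀ := by
  have hunit : ∀ u, IsUnit (Sig u).det := fun u => (hpd u).det_pos.ne'.isUnit
  -- differentiability of each inverse entry
  have hdiff : ∀ i j, DifferentiableAt ℝ (fun u => (Sig u)⁻¹ i j) s₀ := by
    intro i j
    have heq : (fun u => (Sig u)⁻¹ i j)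
        = fun u => ((Sig u).det)⁻¹ * Matrix.adjugate (Sig u) i j := by
      funext u
      rw [Matrix.inv_def, Ring.inverse_eq_inv']
      simp [Matrix.smul_apply, smul_eq_mul]
    rw [heq]
    have hdet : HasDerivAt (fun u => (Sig u).det)
        ((Matrix.adjugate (Sig s₀) * Sig').trace) s₀ :=
      hasDerivAt_det_aux Sig Sig' s₀ hSig'
    have hadj : DifferentiableAt ℝ (fun u => Matrix.adjugate (Sig u) i j) s₀ := by
      have heq2 : (fun u => Matrix.adjugate (Sig u) i j)
          = fun u => ((Sig u).updateRow j (Pi.single i 1)).det := by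
        funext u; rw [Matrix.adjugate_apply]
      rw [heq2]
      refine (hasDerivAt_det_aux (fun u => (Sig u).updateRow j (Pi.single i 1))
        (Sig'.updateRow j 0) s₀ ?_).differentiableAt
      intro k l
      by_cases hk : k = j
      · subst hk
        simp only [Matrix.updateRow_self]
        exact hasDerivAt_const _ _
      · simp only [Matrix.updateRow_ne hk]
        exact hSig' k l
    exact ((hdet.differentiableAt).inv ((hunit s₀).ne_zero)).mul hadj
  set G : Matrix (Fin n) (Fin n) ℝ :=
    Matrix.of (fun i j => deriv (fun u => (Sig u)⁻¹ i j) s₀) with hGdef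
  have hG : ∀ i j, HasDerivAt (fun u => (Sig u)⁻¹ i j) (G i j) s₀ :=
    fun i j => (hdiff i j).hasDerivAt
  -- differentiate Sig u * (Sig u)⁻¹ = 1 entrywise
  have key : ∀ i j, (Sig' * (Sig s₀)⁻¹ + Sig s₀ * G) i j = 0 := by
    intro i j
    have h1 : HasDerivAt (fun u => ∑ k, Sig u i k * (Sig u)⁻¹ k j)
        (∑ k, (Sig' i k * (Sig s₀)⁻¹ k j + Sig s₀ i k * G k j)) s₀ :=
      HasDerivAt.fun_sum fun k _ => (hSig' i k).mul (hG k j)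
    have h2 : (fun u => ∑ k, Sig u i k * (Sig u)⁻¹ k j)
        = fun _ => (1 : Matrix (Fin n) (Fin n) ℝ) i j := by
      funext u
      rw [← Matrix.mul_apply, Matrix.mul_nonsing_inv _ (hunit u)]
    rw [h2] at h1
    have h3 := (hasDerivAt_const s₀ ((1 : Matrix (Fin n) (Fin n) ℝ) i j)).unique h1
    simp only [Matrix.add_apply, Matrix.mul_apply]
    rw [← Finset.sum_add_distrib, ← h3]
  have hmat : Sig' * (Sig s₀)⁻¹ + Sig s₀ * G = 0 := by
    ext i j; exact key i j
  have hGval : G = -((Sig s₀)⁻¹ * Sig' * (Sig s₀)⁻¹) := by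
    have h4 : Sig s₀ * G = -(Sig' * (Sig s₀)⁻¹) := by
      rw [eq_neg_iff_add_eq_zero, add_comm]; exact hmat
    calc G = ((Sig s₀)⁻¹ * Sig s₀) * G := by
              rw [Matrix.nonsing_inv_mul _ (hunit s₀), one_mul]
      _ = (Sig s₀)⁻¹ * (Sig s₀ * G) := by rw [Matrix.mul_assoc]
      _ = (Sig s₀)⁻¹ * -(Sig' * (Sig s₀)⁻¹) := by rw [h4]
      _ = -((Sig s₀)⁻¹ * Sig' * (Sig s₀)⁻¹) := by
            rw [Matrix.mul_neg, Matrix.mul_assoc]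
  intro i j
  have := hG i j
  rwa [hGval] at this

lemma hasDerivAt_gauss_s {n : ℕ} (Sig : ℝ → Matrix (Fin n) (Fin n) ℝ)
    (Sig' : Matrix (Fin n) (Fin n) ℝ) (s₀ : ℝ)
    (hpd : ∀ u : ℝ, (Sig u).PosDef)
    (hSig' : ∀ i j, HasDerivAt (fun u => Sig u i j) (Sig' i j) s₀)
    (x : Fin n → ℝ) :
    HasDerivAt (fun u => gaussDensity (Sig u) x)
      (gaussDensity (Sig s₀) x * (-(1/2)) *
        (((Sig s₀)⁻¹ * Sig').trace - x ⬝ᵥ ((Sig s₀)⁻¹ * Sig' * (Sig s₀)⁻¹) *ᵥ x)) s₀ := by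
  have hunit : ∀ u, IsUnit (Sig u).det := fun u => (hpd u).det_pos.ne'.isUnit
  set B := (Sig s₀)⁻¹ with hB
  set C : ℝ := (2 * Real.pi) ^ n with hC
  have hCpos : 0 < C := pow_pos (by positivity) n
  have hdpos : 0 < (Sig s₀).det := (hpd s₀).det_pos
  -- adjugate = det • inverse
  have hadj : Matrix.adjugate (Sig s₀) = (Sig s₀).det • B := by
    rw [hB, Matrix.inv_def, Ring.inverse_eq_inv', smul_smul,
      mul_inv_cancel₀ hdpos.ne', one_smul]
  -- derivative of determinant
  have hdet : HasDerivAt (fun u => (Sig u).det)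
      ((Sig s₀).det * (B * Sig').trace) s₀ := by
    have := hasDerivAt_det_aux Sig Sig' s₀ hSig'
    rwa [hadj, Matrix.smul_mul, Matrix.trace_smul, smul_eq_mul] at this
  -- derivative of prefactor
  have hpre : HasDerivAt (fun u => (C * (Sig u).det) ^ (-(1:ℝ)/2))
      ((C * (Sig s₀).det) ^ (-(1:ℝ)/2) * (-(1/2)) * (B * Sig').trace) s₀ := by
    have h1 : HasDerivAt (fun u => C * (Sig u).det)
        (C * ((Sig s₀).det * (B * Sig').trace)) s₀ := hdet.const_mul C
    have h2 := h1.rpow_const (p := -(1:ℝ)/2) (Or.inl (by positivity))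
    convert h2 using 1
    have h3 : (C * (Sig s₀).det) ^ (-(1:ℝ)/2 - 1)
        = (C * (Sig s₀).det) ^ (-(1:ℝ)/2) * (C * (Sig s₀).det)⁻¹ := by
      rw [← Real.rpow_neg_one (C * (Sig s₀).det),
        ← Real.rpow_add (by positivity)]
      norm_num
    rw [h3]
    have h4 : (C * (Sig s₀).det)⁻¹ * (C * ((Sig s₀).det * (B * Sig').trace))
        = (B * Sig').trace := by
      field_simp
    field_simp
  -- derivative of quadratic form
  have hq : HasDerivAt (fun u => x ⬝ᵥ (Sig u)⁻¹ *ᵥ x)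
      (-(x ⬝ᵥ (B * Sig' * B) *ᵥ x)) s₀ := by
    have hqe : ∀ (N : Matrix (Fin n) (Fin n) ℝ),
        x ⬝ᵥ N *ᵥ x = ∑ i, ∑ j, x i * (N i j * x j) := by
      intro N
      simp [dotProduct, Matrix.mulVec, Finset.mul_sum]
    have h1 : HasDerivAt (fun u => ∑ i, ∑ j, x i * ((Sig u)⁻¹ i j * x j))
        (∑ i, ∑ j, x i * ((-(B * Sig' * B)) i j * x j)) s₀ := by
      refine HasDerivAt.fun_sum fun i _ => HasDerivAt.fun_sum fun j _ => ?_
      exact (((hasDerivAt_inv_aux Sig Sig' s₀ hpd hSig' i j).mul_const (x j)).const_mul (x i))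
    have h2 : (fun u => x ⬝ᵥ (Sig u)⁻¹ *ᵥ x)
        = fun u => ∑ i, ∑ j, x i * ((Sig u)⁻¹ i j * x j) := by
      funext u; exact hqe _
    rw [h2]
    convert h1 using 1
    rw [← hqe]
    simp [Matrix.neg_mulVec]
  -- derivative of exp factor
  have hexp : HasDerivAt (fun u => Real.exp (-(1/2) * (x ⬝ᵥ (Sig u)⁻¹ *ᵥ x)))
      (Real.exp (-(1/2) * (x ⬝ᵥ B *ᵥ x)) *
        (-(1/2) * (-(x ⬝ᵥ (B * Sig' * B) *ᵥ x)))) s₀ := by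
    exact (hq.const_mul (-(1/2))).exp
  have htotal := hpre.fun_mul hexp
  have heq : (fun u => gaussDensity (Sig u) x)
      = fun u => (C * (Sig u).det) ^ (-(1:ℝ)/2) *
          Real.exp (-(1/2) * (x ⬝ᵥ (Sig u)⁻¹ *ᵥ x)) := rfl
  rw [heq]
  convert htotal using 1
  · rfl
  · rfl
  unfold gaussDensity
  rw [← hC, ← hB]
  ring

lemma hasDerivAt_div_term {n : ℕ} (S : Matrix (Fin n) (Fin n) ℝ) (A : Matrix (Fin n) (Fin n) ℝ)
    (hsymm : S⁻¹ᵀ = S⁻¹) (x : Fin n → ℝ) (i : Fin n) :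
    HasDerivAt (fun u => gaussDensity S (Function.update x i u) *
        (A *ᵥ Function.update x i u) i)
      (gaussDensity S x * (A i i - (S⁻¹ *ᵥ x) i * (A *ᵥ x) i)) (x i) := by
  set B := S⁻¹ with hB
  have hupd : Function.update x i (x i) = x := Function.update_eq_self i x
  have hL : ∀ j, HasDerivAt (fun u => Function.update x i u j)
      (if j = i then (1:ℝ) else 0) (x i) := by
    intro j
    by_cases hj : j = i
    · subst hj
      simp only [Function.update_self, if_pos rfl]
      exact hasDerivAt_id _
    · simp only [Function.update_of_ne hj, if_neg hj]
      exact hasDerivAt_const _ _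
  -- derivative of (A *ᵥ update x i u) i
  have hm : HasDerivAt (fun u => (A *ᵥ Function.update x i u) i) (A i i) (x i) := by
    have h1 : HasDerivAt (fun u => ∑ j, A i j * Function.update x i u j)
        (∑ j, A i j * if j = i then (1:ℝ) else 0) (x i) :=
      HasDerivAt.fun_sum fun j _ => (hL j).const_mul (A i j)
    have h2 : (∑ j, A i j * if j = i then (1:ℝ) else 0) = A i i := by
      simp [mul_ite]
    have h3 : (fun u => (A *ᵥ Function.update x i u) i)
        = fun u => ∑ j, A i j * Function.update x i u j := by
      funext u; simp [Matrix.mulVec, dotProduct]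
    rw [h3, ← h2]; exact h1
  -- derivative of quadratic form u ↦ y(u) ⬝ᵥ B *ᵥ y(u)
  have hr : HasDerivAt (fun u => Function.update x i u ⬝ᵥ B *ᵥ Function.update x i u)
      (2 * (B *ᵥ x) i) (x i) := by
    have h1 : HasDerivAt
        (fun u => ∑ j, ∑ k, Function.update x i u j * (B j k * Function.update x i u k))
        (∑ j, ∑ k, ((if j = i then (1:ℝ) else 0) * (B j k * x k)
          + x j * (B j k * if k = i then (1:ℝ) else 0))) (x i) := by
      refine HasDerivAt.fun_sum fun j _ => HasDerivAt.fun_sum fun k _ => ?_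
      have := (hL j).fun_mul ((hL k).const_mul (B j k))
      simpa [hupd] using this
    have h2 : (∑ j, ∑ k, ((if j = i then (1:ℝ) else 0) * (B j k * x k)
          + x j * (B j k * if k = i then (1:ℝ) else 0))) = 2 * (B *ᵥ x) i := by
      have e1 : (∑ j, ∑ k, (if j = i then (1:ℝ) else 0) * (B j k * x k))
          = ∑ k, B i k * x k := by
        rw [Finset.sum_eq_single i]
        · simp
        · intro b _ hb; simp [hb]
        · simp
      have e2 : (∑ j, ∑ k, x j * (B j k * if k = i then (1:ℝ) else 0))
          = ∑ j, x j * B j i := by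
        refine Finset.sum_congr rfl fun j _ => ?_
        rw [Finset.sum_eq_single i]
        · simp
        · intro b _ hb; simp [hb]
        · simp
      have hsym : ∀ j, B j i = B i j := fun j => congrFun (congrFun hsymm i) j
      have e3 : ∑ j, x j * B j i = ∑ k, B i k * x k := by
        refine Finset.sum_congr rfl fun j _ => ?_
        rw [hsym j]; ring
      simp only [Finset.sum_add_distrib]
      rw [e1, e2, e3]
      simp [Matrix.mulVec, dotProduct]
      ring
    have h3 : (fun u => Function.update x i u ⬝ᵥ B *ᵥ Function.update x i u)
        = fun u => ∑ j, ∑ k, Function.update x i u j * (B j k * Function.update x i u k) := by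
      funext u; simp [dotProduct, Matrix.mulVec, Finset.mul_sum]
    rw [h3, ← h2]; exact h1
  -- density factor
  have hρ : HasDerivAt (fun u => gaussDensity S (Function.update x i u))
      (gaussDensity S x * (-(B *ᵥ x) i)) (x i) := by
    have hexp : HasDerivAt
        (fun u => Real.exp (-(1/2) * (Function.update x i u ⬝ᵥ B *ᵥ Function.update x i u)))
        (Real.exp (-(1/2) * (x ⬝ᵥ B *ᵥ x)) * (-(1/2) * (2 * (B *ᵥ x) i))) (x i) := by
      have := (hr.const_mul (-(1/2))).exp
      simpa [hupd] using this
    have := hexp.const_mul (((2 * Real.pi) ^ n * S.det) ^ (-(1:ℝ)/2))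
    convert this using 1
    · rfl
    · rfl
    unfold gaussDensity; ring
    unfold gaussDensity; ring
  have htotal := hρ.fun_mul hm
  convert htotal using 1
  · rfl
  · rfl
  rw [hupd]
  ring

lemma dot_trans {n : ℕ} (M : Matrix (Fin n) (Fin n) ℝ) (x y : Fin n → ℝ) :
    x ⬝ᵥ Mᵀ *ᵥ y = y ⬝ᵥ M *ᵥ x := by
  simp only [dotProduct, Matrix.mulVec, Matrix.transpose_apply, Finset.mul_sum]
  rw [Finset.sum_comm]
  exact Finset.sum_congr rfl fun i _ => Finset.sum_congr rfl fun j _ => by ring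

/-- For a family of centered Gaussians `ρ(s,·) = N(0, Σ(s))` and the linear vector field
`v_s(x) = A x`, the continuity equation `∂_s ρ + ∇·(ρ v_s) = 0` holds for all `x` iff the
Lyapunov equation `∂_s Sig = A Sig + Sig Aᵀ` holds. -/
theorem stmt_9 {n : ℕ} (Sig : ℝ → Matrix (Fin n) (Fin n) ℝ)
    (Sig' : Matrix (Fin n) (Fin n) ℝ) (A : Matrix (Fin n) (Fin n) ℝ) (s₀ : ℝ)
    (hpd : ∀ u : ℝ, (Sig u).PosDef)
    (hSig' : ∀ i j, HasDerivAt (fun u => Sig u i j) (Sig' i j) s₀) :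
    (∀ x : Fin n → ℝ,
      deriv (fun u => gaussDensity (Sig u) x) s₀ +
        ∑ i, deriv
          (fun u => gaussDensity (Sig s₀) (Function.update x i u) *
            (A *ᵥ Function.update x i u) i) (x i) = 0)
      ↔ Sig' = A * Sig s₀ + Sig s₀ * Aᵀ := by
  set S := Sig s₀ with hSdef
  set B := S⁻¹ with hBdef
  have hunit : IsUnit S.det := (hpd s₀).det_pos.ne'.isUnit
  have hSB : S * B = 1 := Matrix.mul_nonsing_inv _ hunit
  have hBS : B * S = 1 := Matrix.nonsing_inv_mul _ hunit
  have hSsymm : Sᵀ = S := by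
    have h := (hpd s₀).isHermitian
    rw [Matrix.IsHermitian] at h
    simpa [Matrix.conjTranspose, Matrix.map, Matrix.transpose] using h
  have hBsymm : Bᵀ = B := by
    rw [hBdef, Matrix.transpose_nonsing_inv, hSsymm]
  have hSig'symm : Sig'ᵀ = Sig' := by
    ext i j
    rw [Matrix.transpose_apply]
    have h1 : (fun u => Sig u j i) = fun u => Sig u i j := by
      funext u
      have h := (hpd u).isHermitian
      have := congrFun (congrFun h i) j
      simpa [Matrix.conjTranspose_apply] using this
    exact (hSig' j i).unique (h1 ▸ hSig' i j)
  have hρpos : ∀ x : Fin n → ℝ, 0 < gaussDensity S x := by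
    intro x
    unfold gaussDensity
    have h1 : (0:ℝ) < (2 * Real.pi) ^ n * S.det :=
      mul_pos (pow_pos (by positivity) n) (hpd s₀).det_pos
    exact mul_pos (Real.rpow_pos_of_pos h1 _) (Real.exp_pos _)
  -- the key pointwise identity
  have key : ∀ x : Fin n → ℝ,
      deriv (fun u => gaussDensity (Sig u) x) s₀ +
        ∑ i, deriv
          (fun u => gaussDensity (Sig s₀) (Function.update x i u) *
            (A *ᵥ Function.update x i u) i) (x i)
      = gaussDensity S x * (A.trace - (1/2) * (B * Sig').trace
          + (1/2) * (x ⬝ᵥ (B * Sig' * B) *ᵥ x) - x ⬝ᵥ (B * A) *ᵥ x) := by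
    intro x
    have h1 : deriv (fun u => gaussDensity (Sig u) x) s₀
        = gaussDensity S x * (-(1/2)) * ((B * Sig').trace - x ⬝ᵥ (B * Sig' * B) *ᵥ x) :=
      (hasDerivAt_gauss_s Sig Sig' s₀ hpd hSig' x).deriv
    have h2 : ∀ i, deriv
          (fun u => gaussDensity (Sig s₀) (Function.update x i u) *
            (A *ᵥ Function.update x i u) i) (x i)
        = gaussDensity S x * (A i i - (B *ᵥ x) i * (A *ᵥ x) i) :=
      fun i => (hasDerivAt_div_term S A hBsymm x i).deriv
    rw [h1]
    simp_rw [h2]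
    have h3 : ∑ i, gaussDensity S x * (A i i - (B *ᵥ x) i * (A *ᵥ x) i)
        = gaussDensity S x * (A.trace - x ⬝ᵥ (B * A) *ᵥ x) := by
      rw [← Finset.mul_sum]
      congr 1
      have h4 : ∑ i, (A i i - (B *ᵥ x) i * (A *ᵥ x) i)
          = A.trace - ∑ i, (B *ᵥ x) i * (A *ᵥ x) i := by
        rw [Finset.sum_sub_distrib]
        congr 1
      rw [h4]
      congr 1
      have h5 : x ⬝ᵥ (B * A) *ᵥ x = x ⬝ᵥ B *ᵥ (A *ᵥ x) := by
        rw [← Matrix.mulVec_mulVec]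
      rw [h5]
      conv_rhs => rw [← hBsymm]
      rw [dot_trans]
      simp [dotProduct, mul_comm]
    rw [h3]
    ring
  have hATB : ∀ x : Fin n → ℝ, x ⬝ᵥ (Aᵀ * B) *ᵥ x = x ⬝ᵥ (B * A) *ᵥ x := by
    intro x
    have : Aᵀ * B = (B * A)ᵀ := by rw [Matrix.transpose_mul, hBsymm]
    rw [this, dot_trans]
  constructor
  · intro h
    have hF : ∀ x : Fin n → ℝ, A.trace - (1/2) * (B * Sig').trace
          + (1/2) * (x ⬝ᵥ (B * Sig' * B) *ᵥ x) - x ⬝ᵥ (B * A) *ᵥ x = 0 := by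
      intro x
      have := h x
      rw [key x] at this
      exact (mul_eq_zero.mp this).resolve_left (hρpos x).ne'
    have h0 : A.trace - (1/2) * (B * Sig').trace = 0 := by
      have := hF 0
      simpa using this
    set N : Matrix (Fin n) (Fin n) ℝ := B * Sig' * B - (B * A + Aᵀ * B) with hNdef
    have hNq : ∀ x : Fin n → ℝ, x ⬝ᵥ N *ᵥ x = 0 := by
      intro x
      have h1 := hF x
      have h2 := hATB x
      rw [hNdef]
      simp only [Matrix.sub_mulVec, Matrix.add_mulVec, dotProduct_sub,
        dotProduct_add]
      linarith
    have hNsymm : Nᵀ = N := by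
      rw [hNdef]
      simp only [Matrix.transpose_sub, Matrix.transpose_add, Matrix.transpose_mul,
        Matrix.transpose_transpose, hBsymm, hSig'symm]
      rw [add_comm]
      noncomm_ring
    have hbil : ∀ x y : Fin n → ℝ, x ⬝ᵥ N *ᵥ y = 0 := by
      intro x y
      have h1 := hNq (x + y)
      have h2 : y ⬝ᵥ N *ᵥ x = x ⬝ᵥ N *ᵥ y := by
        conv_rhs => rw [← hNsymm]
        rw [dot_trans]
      simp only [Matrix.mulVec_add, dotProduct_add, add_dotProduct,
        hNq x, hNq y] at h1
      linarith
    have hN0 : N = 0 := by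
      ext i j
      have := hbil (Pi.single i 1) (Pi.single j 1)
      simpa [dotProduct, Matrix.mulVec, Pi.single_apply] using this
    have h6 : B * Sig' * B = B * A + Aᵀ * B := by
      rw [hNdef] at hN0
      exact sub_eq_zero.mp hN0
    have h7 : S * (B * Sig' * B) * S = Sig' := by
      rw [show S * (B * Sig' * B) * S = (S * B) * (Sig' * (B * S)) by noncomm_ring,
        hSB, hBS, one_mul, mul_one]
    have h8 : S * (B * A + Aᵀ * B) * S = A * S + S * Aᵀ := by
      rw [show S * (B * A + Aᵀ * B) * S = (S * B) * (A * S) + (S * Aᵀ) * (B * S)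
        by noncomm_ring, hSB, hBS, one_mul, mul_one]
    rw [← h7, h6, h8]
  · intro h x
    rw [key x]
    apply mul_eq_zero_of_right
    have htr : (B * Sig').trace = 2 * A.trace := by
      rw [h, Matrix.mul_add, Matrix.trace_add]
      have t1 : (B * (A * S)).trace = A.trace := by
        rw [Matrix.trace_mul_comm, Matrix.mul_assoc, hSB, Matrix.mul_one]
      have t2 : (B * (S * Aᵀ)).trace = A.trace := by
        rw [← Matrix.mul_assoc, hBS, Matrix.one_mul, Matrix.trace_transpose]
      rw [t1, t2]; ring
    have hquad : B * Sig' * B = B * A + Aᵀ * B := by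
      rw [h, show B * (A * S + S * Aᵀ) * B = (B * A) * (S * B) + (B * S) * (Aᵀ * B)
        by noncomm_ring, hSB, hBS, mul_one, one_mul]
    rw [htr, hquad]
    simp only [Matrix.add_mulVec, dotProduct_add]
    rw [hATB x]
    ring
end
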